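/- For every integer m ≥ 3, the value of the continued logarithm to base m does not depend on the initial point: for any sequence (d_k) of digits in {1,...,m-1} and any x, y ∈ [0,1], lim_{n→∞} (T_{d_n} ∘ ⋯ ∘ T_{d_1})(x) = lim_{n→∞} (T_{d_n} ∘ ⋯ ∘ T_{d_1})(y). -/

import Mathlib

noncomputable def T (m d : ℕ) (x : ℝ) : ℝ := Real.log (d + x) / Real.log m

/-- `F m d x n = T_{d n} ∘ ⋯ ∘ T_{d 1} (x)` (digits indexed from 0). -/
noncomputable def F (m : ℕ) (d : ℕ → ℕ) (x : ℝ) : ℕ → ℝ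
  | 0 => x
  | n + 1 => T m (d n) (F m d x n)

lemma log_lip {d a b : ℝ} (hd : 1 ≤ d) (ha : 0 ≤ a) (hb : 0 ≤ b) :
    |Real.log (d + a) - Real.log (d + b)| ≤ |a - b| := by
  wlog h : b ≤ a generalizing a b
  · rw [abs_sub_comm, abs_sub_comm a b]; exact this hb ha (le_of_not_ge h)
  have h1 : (0:ℝ) < d + b := by linarith
  have h2 : (0:ℝ) < d + a := by linarith
  have hle : Real.log (d + b) ≤ Real.log (d + a) := Real.log_le_log h1 (by linarith)
  rw [abs_of_nonneg (sub_nonneg.2 hle), abs_of_nonneg (sub_nonneg.2 h)]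
  have key := Real.log_le_sub_one_of_pos (div_pos h2 h1)
  rw [Real.log_div h2.ne' h1.ne'] at key
  have heq : (d + a) / (d + b) - 1 = (a - b) / (d + b) := by field_simp; ring
  have hdiv : (a - b) / (d + b) ≤ a - b :=
    div_le_self (by linarith) (by linarith)
  linarith

theorem stmt5 (m : ℕ) (hm : 3 ≤ m) (d : ℕ → ℕ)
    (hd : ∀ k, d k ∈ Finset.Icc 1 (m - 1))
    (x y : ℝ) (hx : x ∈ Set.Icc (0 : ℝ) 1) (hy : y ∈ Set.Icc (0 : ℝ) 1)
    (Lx Ly : ℝ)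
    (hLx : Filter.Tendsto (F m d x) Filter.atTop (nhds Lx))
    (hLy : Filter.Tendsto (F m d y) Filter.atTop (nhds Ly)) :
    Lx = Ly := by
  have hm3 : (3:ℝ) ≤ (m:ℝ) := by exact_mod_cast hm
  have hlog3 : (1:ℝ) < Real.log 3 := by
    rw [Real.lt_log_iff_exp_lt (by norm_num)]
    calc Real.exp 1 < 2.7182818286 := Real.exp_one_lt_d9
      _ < 3 := by norm_num
  have hlogm : (1:ℝ) < Real.log m := lt_of_lt_of_le hlog3
    (Real.log_le_log (by norm_num) hm3)
  have hlogm0 : (0:ℝ) < Real.log m := by linarith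
  -- digits bounds
  have hd1 : ∀ k, (1:ℝ) ≤ (d k : ℝ) := fun k => by
    exact_mod_cast (Finset.mem_Icc.1 (hd k)).1
  have hdm : ∀ k, (d k : ℝ) ≤ (m:ℝ) - 1 := fun k => by
    have := (Finset.mem_Icc.1 (hd k)).2
    have : (d k : ℝ) ≤ ((m - 1 : ℕ) : ℝ) := by exact_mod_cast this
    rwa [Nat.cast_sub (by omega), Nat.cast_one] at this
  -- F stays in [0,1]
  have hF : ∀ z ∈ Set.Icc (0:ℝ) 1, ∀ n, F m d z n ∈ Set.Icc (0:ℝ) 1 := by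
    intro z hz n
    induction n with
    | zero => exact hz
    | succ n ih =>
      obtain ⟨h0, h1⟩ := ih
      constructor
      · apply div_nonneg _ hlogm0.le
        apply Real.log_nonneg; have := hd1 n; linarith
      · show Real.log _ / _ ≤ 1
        rw [div_le_one hlogm0]
        apply Real.log_le_log (by have := hd1 n; linarith)
        have := hdm n; linarith
  -- contraction estimate
  have hbound : ∀ n, |F m d x n - F m d y n| ≤ |x - y| * (1 / Real.log m) ^ n := by
    intro n
    induction n with
    | zero => simp [F]
    | succ n ih =>
      have hx' := hF x hx n
      have hy' := hF y hy n
      have step : |F m d x (n+1) - F m d y (n+1)| ≤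
          |F m d x n - F m d y n| / Real.log m := by
        show |T m (d n) _ - T m (d n) _| ≤ _
        unfold T
        rw [div_sub_div_same, abs_div, abs_of_pos hlogm0]
        exact div_le_div_of_nonneg_right (log_lip (hd1 n) hx'.1 hy'.1) hlogm0.le
      calc |F m d x (n+1) - F m d y (n+1)| ≤ |F m d x n - F m d y n| / Real.log m :=
            step
        _ ≤ (|x - y| * (1 / Real.log m) ^ n) / Real.log m := by
            exact div_le_div_of_nonneg_right ih hlogm0.le
        _ = |x - y| * (1 / Real.log m) ^ (n + 1) := by
            rw [pow_succ]; ring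
  -- the bound tends to 0
  have hgeo : Filter.Tendsto (fun n => |x - y| * (1 / Real.log m) ^ n)
      Filter.atTop (nhds 0) := by
    rw [show (0:ℝ) = |x - y| * 0 by ring]
    apply Filter.Tendsto.const_mul
    apply tendsto_pow_atTop_nhds_zero_of_lt_one
    · positivity
    · rw [div_lt_one hlogm0]; exact hlogm
  have hdiff : Filter.Tendsto (fun n => F m d x n - F m d y n) Filter.atTop
      (nhds (Lx - Ly)) := hLx.sub hLy
  have hzero : Filter.Tendsto (fun n => F m d x n - F m d y n) Filter.atTop
      (nhds 0) := by
    apply squeeze_zero_norm (fun n => ?_) hgeo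
    simpa using hbound n
  have := tendsto_nhds_unique hdiff hzero
  linarith
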